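/- Let u : ℂ → ℝ be concave and let S^+ ⊆ (0, 2π) be the set of directions θ such that there is a sequence z_n → ∞ with arg z_n → θ and log⁺(−u(z_n))/log|z_n| → ∞ (directions of fast decrease). If θ₀ ∈ (θ₁, θ₂) with |θ₂ − θ₁| < π and θ₀ is a direction of fast decrease, then θ₁ or θ₂ is also a direction of fast decrease. -/

import Mathlib

open Real Complex Filter

/-- `θ` is a direction of fast decrease for `u`: there is a sequence `zₙ = rₙ e^{i φₙ} → ∞`
with `φₙ → θ` and `log⁺(−u(zₙ)) / log rₙ → ∞`. -/
def FastDecreaseDir (u : ℂ → ℝ) (θ : ℝ) : Prop :=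
  ∃ r φ : ℕ → ℝ,
    Tendsto r atTop atTop ∧
    Tendsto φ atTop (nhds θ) ∧
    Tendsto (fun n =>
      max (Real.log (-(u ((r n : ℂ) * Complex.exp (φ n * Complex.I))))) 0 / Real.log (r n))
      atTop atTop

lemma logplus_mono_abs {x y : ℝ} (h : |x| ≤ y) :
    max (Real.log x) 0 ≤ max (Real.log y) 0 := by
  rw [← Real.log_abs x]
  rcases eq_or_lt_of_le (abs_nonneg x) with h0 | h0
  · simp [← h0]
  · exact max_le_max (Real.log_le_log h0 h) le_rfl

lemma exp_decomp (θ m : ℝ) : Complex.exp (θ * Complex.I) =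
    Complex.exp (m * Complex.I) * (↑(Real.cos (θ - m)) + ↑(Real.sin (θ - m)) * Complex.I) := by
  rw [Complex.ofReal_cos, Complex.ofReal_sin, ← Complex.exp_mul_I, ← Complex.exp_add]
  congr 1
  push_cast
  ring

lemma concave_growth (u : ℂ → ℝ) (hconc : ConcaveOn ℝ Set.univ u) :
    ∃ C : ℝ, ∀ z : ℂ, 1 ≤ ‖z‖ → u z ≤ C * ‖z‖ := by
  have hcont : Continuous u := hconc.locallyLipschitz.continuous
  obtain ⟨v, hv, hB⟩ := (isCompact_sphere (0:ℂ) 1).exists_isMaxOn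
    (NormedSpace.sphere_nonempty.2 zero_le_one) hcont.continuousOn
  refine ⟨u v + |u 0|, fun z hz => ?_⟩
  set R := ‖z‖ with hR
  have hR1 : 1 ≤ R := hz
  have hR0 : 0 < R := lt_of_lt_of_le one_pos hR1
  have hmem : R⁻¹ • z ∈ Metric.sphere (0:ℂ) 1 := by
    simp only [Metric.mem_sphere, dist_zero_right, norm_smul, norm_inv, Real.norm_eq_abs,
      abs_of_pos hR0, ← hR]
    exact inv_mul_cancel₀ hR0.ne'
  have hinv1 : R⁻¹ ≤ 1 := by
    rw [inv_le_one_iff₀]; right; exact hR1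
  have hcc := hconc.2 (Set.mem_univ z) (Set.mem_univ (0:ℂ))
    (le_of_lt (inv_pos.2 hR0)) (by linarith : (0:ℝ) ≤ 1 - R⁻¹) (by ring)
  have heq : R⁻¹ • z + (1 - R⁻¹) • (0:ℂ) = R⁻¹ • z := by simp
  rw [heq] at hcc
  have h2 : u (R⁻¹ • z) ≤ u v := hB hmem
  rw [smul_eq_mul, smul_eq_mul] at hcc
  have hinv : R⁻¹ * R = 1 := inv_mul_cancel₀ hR0.ne'
  have h3 : R * (R⁻¹ * u z + (1 - R⁻¹) * u 0) = u z + (R - 1) * u 0 := by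
    field_simp
  have h4 : u z + (R - 1) * u 0 ≤ R * u v := by
    rw [← h3]
    exact (mul_le_mul_of_nonneg_left (hcc.trans h2) hR0.le)
  nlinarith [mul_nonneg (by linarith : (0:ℝ) ≤ R - 1)
    (by have := neg_abs_le (u 0); linarith : (0:ℝ) ≤ |u 0| + u 0), abs_nonneg (u 0)]

lemma key_dichotomy (u : ℂ → ℝ) (hconc : ConcaveOn ℝ Set.univ u) {m δ r φ : ℝ}
    (hδ0 : 0 < δ) (hδ : δ < π / 2) (hr : 0 < r) (hφ : |φ - m| ≤ δ) :
    u ((↑(r * (Real.cos (φ - m) / Real.cos δ)) : ℂ) * Complex.exp (↑(m - δ) * Complex.I))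
      ≤ u ((r : ℂ) * Complex.exp (↑φ * Complex.I)) ∨
    u ((↑(r * (Real.cos (φ - m) / Real.cos δ)) : ℂ) * Complex.exp (↑(m + δ) * Complex.I))
      ≤ u ((r : ℂ) * Complex.exp (↑φ * Complex.I)) := by
  set ψ := φ - m with hψ
  have hψδ : |ψ| ≤ δ := hφ
  have hcδ : 0 < Real.cos δ := Real.cos_pos_of_mem_Ioo ⟨by linarith, hδ⟩
  have hsδ : 0 < Real.sin δ := Real.sin_pos_of_pos_of_lt_pi hδ0 (by linarith [Real.pi_pos])
  have hC : Real.cos δ ≤ Real.cos ψ := by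
    rw [← Real.cos_abs ψ]
    exact Real.cos_le_cos_of_nonneg_of_le_pi (abs_nonneg ψ) (by linarith [Real.pi_pos]) hψδ
  have hsin : ∀ x : ℝ, |x| ≤ δ → |Real.sin x| ≤ Real.sin δ := by
    intro x hx
    have h1 : -(π/2) ≤ -x := by cases abs_le.1 hx; linarith
    have h2 : -(π/2) ≤ x := by cases abs_le.1 hx; linarith
    have hd2 : δ ≤ π/2 := le_of_lt hδ
    rcases le_or_gt 0 (Real.sin x) with h | h
    · rw [_root_.abs_of_nonneg h]
      exact Real.sin_le_sin_of_le_of_le_pi_div_two h2 hd2 (le_of_abs_le hx)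
    · rw [_root_.abs_of_neg h, ← Real.sin_neg]
      exact Real.sin_le_sin_of_le_of_le_pi_div_two h1 hd2
        (by cases abs_le.1 hx; linarith)
  have hS : |Real.sin ψ| ≤ Real.sin δ := hsin ψ hψδ
  -- abbreviations
  set ρ : ℝ := r * (Real.cos ψ / Real.cos δ) with hρdef
  have hρ : 0 < ρ := mul_pos hr (div_pos (lt_of_lt_of_le hcδ hC) hcδ)
  have hone : 1 ≤ Real.cos ψ / Real.cos δ := (one_le_div hcδ).2 hC
  have hbound : r * |Real.sin ψ| ≤ ρ * Real.sin δ := by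
    rw [hρdef]
    calc r * |Real.sin ψ| ≤ r * Real.sin δ := mul_le_mul_of_nonneg_left hS hr.le
      _ = r * 1 * Real.sin δ := by ring
      _ ≤ r * (Real.cos ψ / Real.cos δ) * Real.sin δ :=
          mul_le_mul_of_nonneg_right
            (mul_le_mul_of_nonneg_left hone hr.le) hsδ.le
  set lam : ℝ := (ρ * Real.sin δ - r * Real.sin ψ) / (2 * (ρ * Real.sin δ)) with hlam
  have hden : 0 < 2 * (ρ * Real.sin δ) := by positivity
  have hrS : |r * Real.sin ψ| ≤ ρ * Real.sin δ := by
    rw [abs_mul, abs_of_pos hr]; exact hbound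
  have hrS' := abs_le.1 hrS
  have hlam0 : 0 ≤ lam := div_nonneg (by linarith [hrS'.2]) hden.le
  have hlam1 : lam ≤ 1 := by
    rw [hlam, div_le_one hden]
    linarith [hrS'.1]
  have H1 : ρ * Real.cos δ = r * Real.cos ψ := by
    rw [hρdef]; field_simp
  have H2 : ρ * Real.sin δ * (1 - 2 * lam) = r * Real.sin ψ := by
    rw [hlam]
    field_simp
    ring
  -- the complex identity
  have hz : lam • ((↑ρ : ℂ) * Complex.exp (↑(m - δ) * Complex.I))
      + (1 - lam) • ((↑ρ : ℂ) * Complex.exp (↑(m + δ) * Complex.I))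
      = (r : ℂ) * Complex.exp (↑φ * Complex.I) := by
    have e1 := exp_decomp (m - δ) m
    have e2 := exp_decomp (m + δ) m
    have e3 := exp_decomp φ m
    rw [e1, e2, e3]
    simp only [show m - δ - m = -δ by ring, show m + δ - m = δ by ring,
      Real.cos_neg, Real.sin_neg, Complex.real_smul, Complex.ofReal_neg]
    have H1' : (ρ : ℂ) * (Real.cos δ : ℂ) = (r : ℂ) * (Real.cos ψ : ℂ) := by
      exact_mod_cast congrArg (Complex.ofReal) H1
    have H2' : (ρ : ℂ) * (Real.sin δ : ℂ) * (1 - 2 * (lam : ℂ)) = (r : ℂ) * (Real.sin ψ : ℂ) := by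
      exact_mod_cast congrArg (Complex.ofReal) H2
    rw [hψ] at H1' H2'
    push_cast at H1' H2' ⊢
    linear_combination Complex.exp ((m:ℂ) * Complex.I) * H1'
      + Complex.exp ((m:ℂ) * Complex.I) * Complex.I * H2'
  have hcc := hconc.2 (Set.mem_univ ((↑ρ : ℂ) * Complex.exp (↑(m - δ) * Complex.I)))
    (Set.mem_univ ((↑ρ : ℂ) * Complex.exp (↑(m + δ) * Complex.I)))
    hlam0 (by linarith : (0:ℝ) ≤ 1 - lam) (by ring)
  rw [hz] at hcc
  rw [smul_eq_mul, smul_eq_mul] at hcc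
  by_contra hcon
  push_neg at hcon
  obtain ⟨ha, hb⟩ := hcon
  rcases eq_or_lt_of_le hlam0 with h0 | h0
  · rw [← h0] at hcc
    simp only [zero_mul, zero_add, sub_zero, one_mul] at hcc
    linarith
  · have := mul_lt_mul_of_pos_left ha h0
    have := mul_le_mul_of_nonneg_left hb.le (by linarith : (0:ℝ) ≤ 1 - lam)
    nlinarith

lemma fastDecrease_of_frequently (u : ℂ → ℝ) (θ : ℝ) (ρ F : ℕ → ℝ)
    (hρ : Tendsto ρ atTop atTop) (hF : Tendsto F atTop atTop)
    (hfreq : ∃ᶠ n in atTop, F n ≤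
      max (Real.log (-(u ((ρ n : ℂ) * Complex.exp (θ * Complex.I))))) 0 / Real.log (ρ n)) :
    FastDecreaseDir u θ := by
  obtain ⟨g, hg, hPg⟩ := Filter.extraction_of_frequently_atTop hfreq
  exact ⟨ρ ∘ g, fun _ => θ, hρ.comp hg.tendsto_atTop, tendsto_const_nhds,
    tendsto_atTop_mono (fun k => hPg k) (hF.comp hg.tendsto_atTop)⟩

theorem fast_decrease_spreads_to_endpoints (u : ℂ → ℝ)
    (hconc : ConcaveOn ℝ Set.univ u)
    (θ₀ θ₁ θ₂ : ℝ) (h₁ : θ₁ < θ₀) (h₂ : θ₀ < θ₂) (hlt : θ₂ - θ₁ < π)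
    (h₀ : FastDecreaseDir u θ₀) :
    FastDecreaseDir u θ₁ ∨ FastDecreaseDir u θ₂ := by
  obtain ⟨r₀, φ₀, hr₀, hφ₀, hM₀⟩ := h₀
  obtain ⟨C, hC⟩ := concave_growth u hconc
  set δ : ℝ := (θ₂ - θ₁) / 2 with hδdef
  set m : ℝ := (θ₁ + θ₂) / 2 with hmdef
  have hδ0 : 0 < δ := by rw [hδdef]; linarith
  have hδπ : δ < π / 2 := by rw [hδdef]; linarith
  have hm1 : m - δ = θ₁ := by rw [hδdef, hmdef]; ring
  have hm2 : m + δ = θ₂ := by rw [hδdef, hmdef]; ring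
  -- Step 1: we may assume u (z n) < -1 along a subsequence
  have habsz : ∀ n, 0 < r₀ n → ‖(r₀ n : ℂ) * Complex.exp (φ₀ n * Complex.I)‖ = r₀ n := by
    intro n hn
    rw [norm_mul, Complex.norm_exp_ofReal_mul_I, mul_one, Complex.norm_real, Real.norm_eq_abs, abs_of_pos hn]
  have hfreq : ∃ᶠ n in atTop, u ((r₀ n : ℂ) * Complex.exp (φ₀ n * Complex.I)) < -1 := by
    by_contra hcon
    rw [not_frequently] at hcon
    have hcon' : ∀ᶠ n in atTop, -1 ≤ u ((r₀ n : ℂ) * Complex.exp (φ₀ n * Complex.I)) := by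
      filter_upwards [hcon] with n hn
      push_neg at hn
      exact hn
    have hK : ∀ᶠ n in atTop, Real.exp (Real.log (1 + |C|)) ≤ r₀ n :=
      hr₀.eventually_ge_atTop _
    have hr2 : ∀ᶠ n in atTop, 2 ≤ r₀ n := hr₀.eventually_ge_atTop 2
    have hM3 : ∀ᶠ n in atTop,
        (3:ℝ) ≤ max (Real.log (-(u ((r₀ n : ℂ) * Complex.exp (φ₀ n * Complex.I))))) 0
          / Real.log (r₀ n) := hM₀.eventually_ge_atTop 3
    have : ∀ᶠ n in (atTop : Filter ℕ), False := by
      filter_upwards [hcon', hK, hr2, hM3] with n h1 hK2 h2 h3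
      set z := (r₀ n : ℂ) * Complex.exp (φ₀ n * Complex.I) with hz
      have hrpos : (0:ℝ) < r₀ n := by linarith
      have hub : u z ≤ C * r₀ n := by
        have := hC z (by rw [hz, habsz n hrpos]; linarith)
        rwa [hz, habsz n hrpos] at this
      have hCabs : 1 + |C| ≥ 1 := by have := abs_nonneg C; linarith
      have habs2 : |(-(u z))| ≤ (1 + |C|) * r₀ n := by
        rw [abs_le]
        constructor
        · have h5 : C * r₀ n ≤ |C| * r₀ n :=
            mul_le_mul_of_nonneg_right (le_abs_self C) hrpos.le
          nlinarith
        · nlinarith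
      have hlog := logplus_mono_abs habs2
      have hlr : 0 < Real.log (r₀ n) := Real.log_pos (by linarith)
      have hdiv : max (Real.log (-(u z))) 0 / Real.log (r₀ n)
          ≤ max (Real.log ((1 + |C|) * r₀ n)) 0 / Real.log (r₀ n) := by gcongr
      have hKlog : Real.log (1 + |C|) ≤ Real.log (r₀ n) := by
        calc Real.log (1 + |C|) = Real.log (Real.exp (Real.log (1 + |C|))) :=
              (Real.log_exp _).symm
          _ ≤ Real.log (r₀ n) := Real.log_le_log (Real.exp_pos _) hK2
      have hsplit : Real.log ((1 + |C|) * r₀ n)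
          = Real.log (1 + |C|) + Real.log (r₀ n) :=
        Real.log_mul (by linarith) (by linarith)
      have hKnonneg : 0 ≤ Real.log (1 + |C|) := Real.log_nonneg hCabs
      have hmax : max (Real.log ((1 + |C|) * r₀ n)) 0 = Real.log ((1 + |C|) * r₀ n) := by
        apply max_eq_left
        rw [hsplit]; linarith
      rw [hmax, hsplit] at hdiv
      have : (Real.log (1 + |C|) + Real.log (r₀ n)) / Real.log (r₀ n) ≤ 2 := by
        rw [div_le_iff₀ hlr]; linarith
      linarith [le_trans h3 hdiv]
    obtain ⟨n, hn⟩ := this.exists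
    exact hn
  obtain ⟨g, hg, hPg⟩ := Filter.extraction_of_frequently_atTop hfreq
  set r : ℕ → ℝ := r₀ ∘ g with hrdef
  set φ : ℕ → ℝ := φ₀ ∘ g with hφdef
  have hr : Tendsto r atTop atTop := hr₀.comp hg.tendsto_atTop
  have hφ : Tendsto φ atTop (nhds θ₀) := hφ₀.comp hg.tendsto_atTop
  have hM : Tendsto (fun n =>
      max (Real.log (-(u ((r n : ℂ) * Complex.exp (φ n * Complex.I))))) 0 / Real.log (r n))
      atTop atTop := hM₀.comp hg.tendsto_atTop
  have hneg : ∀ n, u ((r n : ℂ) * Complex.exp (φ n * Complex.I)) < -1 := fun n => hPg n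
  clear hPg hfreq hM₀ hφ₀ hr₀
  -- Step 2: the comparison sequence on the boundary rays
  set c : ℕ → ℝ := fun n => Real.cos (φ n - m) / Real.cos δ with hcdef
  set ρ : ℕ → ℝ := fun n => r n * c n with hρdef
  have hcδ : 0 < Real.cos δ := Real.cos_pos_of_mem_Ioo ⟨by linarith, hδπ⟩
  have hθ₀m : |θ₀ - m| < δ := abs_lt.2 ⟨by rw [hmdef, hδdef]; linarith, by rw [hmdef, hδdef]; linarith⟩
  have hcosθ₀ : 0 < Real.cos (θ₀ - m) := by
    rcases abs_lt.1 hθ₀m with ⟨hl, hu⟩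
    exact Real.cos_pos_of_mem_Ioo ⟨by linarith, by linarith⟩
  set L : ℝ := Real.cos (θ₀ - m) / Real.cos δ with hLdef
  have hL : 0 < L := div_pos hcosθ₀ hcδ
  have hc : Tendsto c atTop (nhds L) := (Real.continuous_cos.continuousAt.tendsto.comp (hφ.sub_const m)).div_const _
  have hρtop : Tendsto ρ atTop atTop := hr.atTop_mul_pos hL hc
  -- Step 3: log r / log ρ → 1
  have hlogc : Tendsto (fun n => Real.log (c n)) atTop (nhds (Real.log L)) :=
    (Real.continuousAt_log hL.ne').tendsto.comp hc
  have hlogr : Tendsto (fun n => Real.log (r n)) atTop atTop :=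
    Real.tendsto_log_atTop.comp hr
  have hquot : Tendsto (fun n => Real.log (c n) / Real.log (r n)) atTop (nhds 0) :=
    hlogc.div_atTop hlogr
  have hbase : Tendsto (fun n => (1 + Real.log (c n) / Real.log (r n))⁻¹) atTop (nhds 1) := by
    have h := (tendsto_const_nhds.add hquot).inv₀ (by norm_num : (1:ℝ) + 0 ≠ 0)
    simpa using h
  have hcpos : ∀ᶠ n in atTop, 0 < c n := hc.eventually_const_lt hL
  have hr2 : ∀ᶠ n in atTop, 2 ≤ r n := hr.eventually_ge_atTop 2
  have hρ2 : ∀ᶠ n in atTop, 2 ≤ ρ n := hρtop.eventually_ge_atTop 2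
  have hT : Tendsto (fun n => Real.log (r n) / Real.log (ρ n)) atTop (nhds 1) := by
    apply hbase.congr'
    filter_upwards [hr2, hρ2, hcpos] with n h2 hp2 hcp
    have hlrpos : 0 < Real.log (r n) := Real.log_pos (by linarith)
    have hsplit : Real.log (ρ n) = Real.log (r n) + Real.log (c n) :=
      Real.log_mul (by linarith) hcp.ne'
    have heq1 : (1 : ℝ) + Real.log (c n) / Real.log (r n)
        = (Real.log (r n) + Real.log (c n)) / Real.log (r n) := by
      field_simp
    rw [heq1, inv_div, hsplit]
  set F : ℕ → ℝ := fun n =>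
    max (Real.log (-(u ((r n : ℂ) * Complex.exp (φ n * Complex.I))))) 0 / Real.log (ρ n)
    with hFdef
  have hF : Tendsto F atTop atTop := by
    apply (hM.atTop_mul_pos one_pos hT).congr'
    filter_upwards [hr2] with n h2
    have hlr : Real.log (r n) ≠ 0 := (Real.log_pos (by linarith)).ne'
    rw [hFdef]
    dsimp only
    rw [div_mul_div_comm,
      mul_comm (max (Real.log (-(u ((r n : ℂ) * Complex.exp (φ n * Complex.I))))) 0)
        (Real.log (r n)),
      mul_div_mul_left _ _ hlr]
  have hIcc : ∀ᶠ n in atTop, φ n ∈ Set.Icc θ₁ θ₂ := hφ.eventually (Icc_mem_nhds h₁ h₂)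
  have hrpos : ∀ᶠ n in atTop, 0 < r n := hr.eventually_gt_atTop 0
  have Hor : ∀ᶠ n in atTop,
      (F n ≤ max (Real.log (-(u ((ρ n : ℂ) * Complex.exp (θ₁ * Complex.I))))) 0 / Real.log (ρ n)
       ∨ F n ≤ max (Real.log (-(u ((ρ n : ℂ) * Complex.exp (θ₂ * Complex.I))))) 0
          / Real.log (ρ n)) := by
    filter_upwards [hIcc, hrpos, hρ2] with n hIn hrn hρn
    have hφm : |φ n - m| ≤ δ := by
      rw [abs_le]
      constructor
      · have := hIn.1; linarith
      · have := hIn.2; linarith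
    have hd := key_dichotomy u hconc hδ0 hδπ hrn hφm
    rw [hm1, hm2] at hd
    have hlρ : 0 < Real.log (ρ n) := Real.log_pos (by linarith)
    have huz := hneg n
    rcases hd with hd | hd
    · left
      have h1 : max (Real.log (-(u ((r n : ℂ) * Complex.exp (φ n * Complex.I))))) 0
          ≤ max (Real.log (-(u ((ρ n : ℂ) * Complex.exp (θ₁ * Complex.I))))) 0 := by
        refine max_le_max (Real.log_le_log (by linarith) ?_) le_rfl
        have : u ((ρ n : ℂ) * Complex.exp (θ₁ * Complex.I))
            ≤ u ((r n : ℂ) * Complex.exp (φ n * Complex.I)) := hd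
        linarith
      rw [hFdef]
      dsimp only
      gcongr
    · right
      have h1 : max (Real.log (-(u ((r n : ℂ) * Complex.exp (φ n * Complex.I))))) 0
          ≤ max (Real.log (-(u ((ρ n : ℂ) * Complex.exp (θ₂ * Complex.I))))) 0 := by
        refine max_le_max (Real.log_le_log (by linarith) ?_) le_rfl
        have : u ((ρ n : ℂ) * Complex.exp (θ₂ * Complex.I))
            ≤ u ((r n : ℂ) * Complex.exp (φ n * Complex.I)) := hd
        linarith
      rw [hFdef]
      dsimp only
      gcongr
  by_cases hA : ∃ᶠ n in atTop,
      F n ≤ max (Real.log (-(u ((ρ n : ℂ) * Complex.exp (θ₁ * Complex.I))))) 0 / Real.log (ρ n)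
  · exact Or.inl (fastDecrease_of_frequently u θ₁ ρ F hρtop hF hA)
  · right
    rw [not_frequently] at hA
    apply fastDecrease_of_frequently u θ₂ ρ F hρtop hF
    exact ((Hor.and hA).mono (fun n h => h.1.resolve_left h.2)).frequently
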